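/- Let C be a 3×3 unitary matrix with entries a^{(i,j)}, e^{iΔ} = det C, and λ ∈ ℝ with a^{(1,1)}e^{iλ} − e^{iΔ} conj(a^{(3,3)}) ≠ 0. Then the transfer matrix satisfies tr T(λ) = det T(λ) · conj(tr T(λ)). -/

import Mathlib

open Complex Matrix ComplexConjugate

noncomputable section

/-- The transfer matrix `T(λ)` of a 3×3 coin matrix `M`. -/
def transfer (M : Matrix (Fin 3) (Fin 3) ℂ) (lam : ℝ) : Matrix (Fin 2) (Fin 2) ℂ :=
  (M 0 0 * Complex.exp (lam * Complex.I) - M.det * conj (M 2 2))⁻¹ •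
    !![Complex.exp (lam * Complex.I) * (Complex.exp (lam * Complex.I) - M 1 1),
        -(M 0 2 * Complex.exp (lam * Complex.I)) - M.det * conj (M 2 0);
        M 2 0 * Complex.exp (lam * Complex.I) + M.det * conj (M 0 2),
        -(M.det * (Complex.exp (-(lam * Complex.I)) - conj (M 1 1)))]

/-- `tr T(λ) = det T(λ) · conj (tr T(λ))` for the transfer matrix of a
3×3 unitary coin. -/
theorem trace_transfer_conj (M : Matrix (Fin 3) (Fin 3) ℂ)
    (hM : M ∈ Matrix.unitaryGroup (Fin 3) ℂ) (lam : ℝ)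
    (hden : M 0 0 * Complex.exp (lam * Complex.I) - M.det * conj (M 2 2) ≠ 0) :
    (transfer M lam).trace = (transfer M lam).det * conj ((transfer M lam).trace) := by
  have hU1 : Mᴴ * M = 1 := hM.1
  have hU2 : M * Mᴴ = 1 := hM.2
  have hdd : M.det * conj M.det = 1 := by
    have h := congrArg Matrix.det hU2
    rw [Matrix.det_mul, Matrix.det_conjTranspose, Matrix.det_one] at h
    exact h
  have hadj : M.adjugate = M.det • Mᴴ := by
    calc M.adjugate = (Mᴴ * M) * M.adjugate := by rw [hU1, Matrix.one_mul]
      _ = Mᴴ * (M * M.adjugate) := by rw [Matrix.mul_assoc]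
      _ = Mᴴ * (M.det • (1 : Matrix (Fin 3) (Fin 3) ℂ)) := by rw [Matrix.mul_adjugate]
      _ = M.det • Mᴴ := by rw [Matrix.mul_smul, Matrix.mul_one]
  have hcof : ∀ p q : Fin 3, M.det * conj (M p q) = M.adjugate q p := by
    intro p q
    rw [hadj]
    simp [Matrix.conjTranspose_apply]
  have c00 : M.det * conj (M 0 0) = M 1 1 * M 2 2 - M 1 2 * M 2 1 := by
    rw [hcof 0 0, Matrix.adjugate_fin_three]
    simp
  have c02 : M.det * conj (M 0 2) = M 1 0 * M 2 1 - M 1 1 * M 2 0 := by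
    rw [hcof 0 2, Matrix.adjugate_fin_three]
    simp
  have c11 : M.det * conj (M 1 1) = M 0 0 * M 2 2 - M 0 2 * M 2 0 := by
    rw [hcof 1 1, Matrix.adjugate_fin_three]
    simp
  have c20 : M.det * conj (M 2 0) = M 0 1 * M 1 2 - M 0 2 * M 1 1 := by
    rw [hcof 2 0, Matrix.adjugate_fin_three]
    simp
  have c22 : M.det * conj (M 2 2) = M 0 0 * M 1 1 - M 0 1 * M 1 0 := by
    rw [hcof 2 2, Matrix.adjugate_fin_three]
    simp
  have hdet3 := Matrix.det_fin_three M
  have hEF : Complex.exp (lam * Complex.I) * Complex.exp (-(lam * Complex.I)) = 1 := by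
    rw [← Complex.exp_add, add_neg_cancel, Complex.exp_zero]
  have hcE : conj (Complex.exp (lam * Complex.I)) = Complex.exp (-(lam * Complex.I)) := by
    rw [← Complex.exp_conj]
    congr 1
    simp
  have hcF : conj (Complex.exp (-(lam * Complex.I))) = Complex.exp (lam * Complex.I) := by
    rw [← hcE, Complex.conj_conj]
  have htr : (transfer M lam).trace
      = (M 0 0 * Complex.exp (lam * Complex.I) - M.det * conj (M 2 2))⁻¹ *
        (Complex.exp (lam * Complex.I) * (Complex.exp (lam * Complex.I) - M 1 1) +
          -(M.det * (Complex.exp (-(lam * Complex.I)) - conj (M 1 1)))) := by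
    rw [transfer, Matrix.trace_smul, Matrix.trace_fin_two_of, smul_eq_mul]
  have hdet2 : (transfer M lam).det
      = ((M 0 0 * Complex.exp (lam * Complex.I) - M.det * conj (M 2 2))⁻¹) ^ 2 *
        ((Complex.exp (lam * Complex.I) * (Complex.exp (lam * Complex.I) - M 1 1)) *
            -(M.det * (Complex.exp (-(lam * Complex.I)) - conj (M 1 1))) -
          (-(M 0 2 * Complex.exp (lam * Complex.I)) - M.det * conj (M 2 0)) *
            (M 2 0 * Complex.exp (lam * Complex.I) + M.det * conj (M 0 2))) := by
    rw [transfer, Matrix.det_smul, Matrix.det_fin_two_of]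
    norm_num
  have hcd : conj (M 0 0) * Complex.exp (-(lam * Complex.I)) - conj M.det * M 2 2 ≠ 0 := by
    intro h
    apply hden
    have h2 := congrArg conj h
    simp only [map_sub, _root_.map_mul, Complex.conj_conj, hcF, map_zero] at h2
    exact h2
  have hct : conj ((transfer M lam).trace)
      = (conj (M 0 0) * Complex.exp (-(lam * Complex.I)) - conj M.det * M 2 2)⁻¹ *
        (Complex.exp (-(lam * Complex.I)) * (Complex.exp (-(lam * Complex.I)) - conj (M 1 1)) +
          -(conj M.det * (Complex.exp (lam * Complex.I) - M 1 1))) := by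
    rw [htr]
    simp only [_root_.map_mul, map_inv₀, map_sub, map_add, map_neg, Complex.conj_conj, hcE, hcF]
  have h1 : Complex.exp (lam * Complex.I) * (Complex.exp (lam * Complex.I) - M 1 1) +
        -(M.det * (Complex.exp (-(lam * Complex.I)) - conj (M 1 1)))
      = -(M.det * Complex.exp (lam * Complex.I)) *
        (Complex.exp (-(lam * Complex.I)) * (Complex.exp (-(lam * Complex.I)) - conj (M 1 1)) +
          -(conj M.det * (Complex.exp (lam * Complex.I) - M 1 1))) := by
    linear_combination (M.det * Complex.exp (-(lam * Complex.I)) - M.det * conj (M 1 1)) * hEF +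
      (M 1 1 * Complex.exp (lam * Complex.I) - Complex.exp (lam * Complex.I) ^ 2) * hdd
  have h2 : (Complex.exp (lam * Complex.I) * (Complex.exp (lam * Complex.I) - M 1 1)) *
          -(M.det * (Complex.exp (-(lam * Complex.I)) - conj (M 1 1))) -
        (-(M 0 2 * Complex.exp (lam * Complex.I)) - M.det * conj (M 2 0)) *
          (M 2 0 * Complex.exp (lam * Complex.I) + M.det * conj (M 0 2))
      = -(M.det * Complex.exp (lam * Complex.I)) *
        ((M 0 0 * Complex.exp (lam * Complex.I) - M.det * conj (M 2 2)) *
          (conj (M 0 0) * Complex.exp (-(lam * Complex.I)) - conj M.det * M 2 2)) := by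
    linear_combination
      (M.det * M 1 1 - M.det ^ 2 * conj (M 0 0) * conj (M 2 2) -
        Complex.exp (lam * Complex.I) * M.det +
        Complex.exp (lam * Complex.I) * M.det * M 0 0 * conj (M 0 0)) * hEF +
      (Complex.exp (lam * Complex.I) * M.det * M 2 2 * conj (M 2 2) -
        Complex.exp (lam * Complex.I) ^ 2 * M 0 0 * M 2 2) * hdd +
      (-(M.det * conj (M 2 2)) + Complex.exp (lam * Complex.I) * M 0 0) * c00 +
      (M.det * conj (M 2 0) + Complex.exp (lam * Complex.I) * M 0 2) * c02 +
      (-(Complex.exp (lam * Complex.I) * M 1 1) + Complex.exp (lam * Complex.I) ^ 2) * c11 +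
      (-(M 1 1 * M 2 0) + M 1 0 * M 2 1 + Complex.exp (lam * Complex.I) * M 2 0) * c20 +
      (M 1 2 * M 2 1 - M 1 1 * M 2 2 + Complex.exp (lam * Complex.I) * M 2 2) * c22 +
      (M 1 1 - Complex.exp (lam * Complex.I)) * hdet3
  rw [hct, htr, hdet2, h1, h2]
  have e1 := mul_inv_cancel₀ hden
  have e2 := mul_inv_cancel₀ hcd
  linear_combination
    (-((M 0 0 * Complex.exp (lam * Complex.I) - M.det * conj (M 2 2))⁻¹ *
      (-(M.det * Complex.exp (lam * Complex.I))) *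
      (Complex.exp (-(lam * Complex.I)) * (Complex.exp (-(lam * Complex.I)) - conj (M 1 1)) +
        -(conj M.det * (Complex.exp (lam * Complex.I) - M 1 1))))) * e1 +
    (-((M 0 0 * Complex.exp (lam * Complex.I) - M.det * conj (M 2 2))⁻¹ *
      (-(M.det * Complex.exp (lam * Complex.I))) *
      (Complex.exp (-(lam * Complex.I)) * (Complex.exp (-(lam * Complex.I)) - conj (M 1 1)) +
        -(conj M.det * (Complex.exp (lam * Complex.I) - M 1 1))) *
      ((M 0 0 * Complex.exp (lam * Complex.I) - M.det * conj (M 2 2)) *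
        (M 0 0 * Complex.exp (lam * Complex.I) - M.det * conj (M 2 2))⁻¹))) * e2
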